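/- Let p be a prime, n a positive integer, q = p^n, and d = q + 1. Let F be a finite field with q^2 elements, let F_0 = {x in F : x^q = x} be its subfield with q elements, let H = F(t) be the rational function field over F, and let F' be the subfield of H generated by F_0 and the element t^d (so F' = F_0(t^d) = F_0(u) with u = t^d). Then H is a Galois extension of F' of degree 2d, and the Galois group Gal(H/F') is isomorphic to the dihedral group of order 2d; in particular, Gal(H/K) (with K = F(t^d)) is a cyclic normal subgroup of order d on which the nontrivial element of Gal(K/F') acts by inversion. -/

import Mathlib

open Polynomial nonZeroDivisors

namespace Stmt9Aux

variable {F : Type} [Field F]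

noncomputable def polyScale (c : F) (hc : c ≠ 0) : F[X] ≃ₐ[F] F[X] :=
  AlgEquiv.ofAlgHom (aeval (C c * X)) (aeval (C c⁻¹ * X))
    (by
      refine Polynomial.algHom_ext ?_
      simp only [AlgHom.coe_comp, Function.comp_apply, aeval_X, AlgHom.coe_id, id_eq, map_mul,
        aeval_C, algebraMap_eq]
      rw [← mul_assoc, ← C_mul, inv_mul_cancel₀ hc, C_1, one_mul])
    (by
      refine Polynomial.algHom_ext ?_
      simp only [AlgHom.coe_comp, Function.comp_apply, aeval_X, AlgHom.coe_id, id_eq, map_mul,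
        aeval_C, algebraMap_eq]
      rw [← mul_assoc, ← C_mul, mul_inv_cancel₀ hc, C_1, one_mul])

noncomputable def rfScale (c : F) (hc : c ≠ 0) : RatFunc F ≃+* RatFunc F :=
  IsFractionRing.ringEquivOfRingEquiv (polyScale c hc).toRingEquiv

theorem rfScale_algebraMap (c : F) (hc : c ≠ 0) (f : F[X]) :
    rfScale c hc (algebraMap F[X] (RatFunc F) f)
      = algebraMap F[X] (RatFunc F) (aeval (C c * X) f) := by
  simp only [rfScale, IsFractionRing.ringEquivOfRingEquiv_algebraMap]
  rfl

theorem rfScale_C (c : F) (hc : c ≠ 0) (a : F) :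
    rfScale c hc (algebraMap F (RatFunc F) a) = algebraMap F (RatFunc F) a := by
  have := rfScale_algebraMap c hc (Polynomial.C a)
  simpa [RatFunc.algebraMap_C, ← RatFunc.algebraMap_eq_C] using this

theorem rfScale_X (c : F) (hc : c ≠ 0) :
    rfScale c hc RatFunc.X = algebraMap F (RatFunc F) c * RatFunc.X := by
  have := rfScale_algebraMap c hc Polynomial.X
  simpa [RatFunc.algebraMap_X, RatFunc.algebraMap_C, ← RatFunc.algebraMap_eq_C] using this

noncomputable def rfFrob (g : F ≃+* F) : RatFunc F ≃+* RatFunc F :=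
  IsFractionRing.ringEquivOfRingEquiv (Polynomial.mapEquiv g)

theorem rfFrob_algebraMap (g : F ≃+* F) (f : F[X]) :
    rfFrob g (algebraMap F[X] (RatFunc F) f) = algebraMap F[X] (RatFunc F) (f.map g) := by
  simp [rfFrob, Polynomial.mapEquiv_apply]

theorem rfFrob_C (g : F ≃+* F) (a : F) :
    rfFrob g (algebraMap F (RatFunc F) a) = algebraMap F (RatFunc F) (g a) := by
  have := rfFrob_algebraMap g (Polynomial.C a)
  simpa [RatFunc.algebraMap_C, ← RatFunc.algebraMap_eq_C] using this

theorem rfFrob_X (g : F ≃+* F) : rfFrob g RatFunc.X = RatFunc.X := by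
  have := rfFrob_algebraMap g Polynomial.X
  simpa [RatFunc.algebraMap_X] using this

theorem ratfunc_ringHom_ext (f g : RatFunc F →+* RatFunc F)
    (hC : ∀ a : F, f (algebraMap F _ a) = g (algebraMap F _ a))
    (hX : f RatFunc.X = g RatFunc.X) : f = g := by
  have h : f.comp (algebraMap F[X] (RatFunc F)) = g.comp (algebraMap F[X] (RatFunc F)) := by
    refine Polynomial.ringHom_ext (fun a => ?_) ?_
    · simpa [RatFunc.algebraMap_C, ← RatFunc.algebraMap_eq_C] using hC a
    · simpa [RatFunc.algebraMap_X] using hX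
  exact IsLocalization.ringHom_ext (F[X])⁰ h

theorem fix_closure {E : Type*} [Field E] (f : E →+* E) (s : Set E)
    (h : ∀ x ∈ s, f x = x) : ∀ x ∈ Subfield.closure s, f x = x := by
  let M : Subfield E :=
    { carrier := {x | f x = x}
      mul_mem' := fun ha hb => by simp only [Set.mem_setOf_eq, map_mul] at *; rw [ha, hb]
      one_mem' := by simp only [Set.mem_setOf_eq, map_one]
      add_mem' := fun ha hb => by simp only [Set.mem_setOf_eq, map_add] at *; rw [ha, hb]
      zero_mem' := by simp only [Set.mem_setOf_eq, map_zero]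
      neg_mem' := fun ha => by simp only [Set.mem_setOf_eq, map_neg] at *; rw [ha]
      inv_mem' := fun x hx => by simp only [Set.mem_setOf_eq, map_inv₀] at *; rw [hx] }
  have : Subfield.closure s ≤ M := Subfield.closure_le.mpr h
  exact fun x hx => this hx

theorem ratfunc_mem_of (M : Subfield (RatFunc F))
    (hC : ∀ a : F, algebraMap F (RatFunc F) a ∈ M)
    (hX : RatFunc.X ∈ M) (z : RatFunc F) : z ∈ M := by
  have hpoly : ∀ f : F[X], algebraMap F[X] (RatFunc F) f ∈ M := by
    intro f
    induction f using Polynomial.induction_on' with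
    | add p q hp hq => rw [map_add]; exact add_mem hp hq
    | monomial n a =>
      rw [← Polynomial.C_mul_X_pow_eq_monomial, map_mul, map_pow, RatFunc.algebraMap_C,
        RatFunc.algebraMap_X]
      exact mul_mem (by rw [← RatFunc.algebraMap_eq_C]; exact hC a) (pow_mem hX n)
  rw [← RatFunc.num_div_denom z]
  exact div_mem (hpoly _) (hpoly _)

theorem pow_eq_pow_mod_of {G : Type*} [Group G] {g : G} {d : ℕ} (hg : g ^ d = 1) (m : ℕ) :
    g ^ m = g ^ (m % d) := by
  conv_lhs => rw [← Nat.div_add_mod m d]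
  rw [pow_add, pow_mul, hg, one_pow, one_mul]

theorem pow_eq_pow_of_modEq {G : Type*} [Group G] {g : G} {d : ℕ} (hg : g ^ d = 1) {a b : ℕ}
    (h : a ≡ b [MOD d]) : g ^ a = g ^ b := by
  rw [pow_eq_pow_mod_of hg a, pow_eq_pow_mod_of hg b, h]

set_option synthInstance.maxHeartbeats 1000000 in
set_option maxHeartbeats 1000000 in
open IntermediateField in
theorem finrank_le_aux {E H : Type*} [Field E] [Field H] [Algebra E H]
    (x c : H) (d : ℕ) (hd0 : d ≠ 0)
    (u : E) (hu : algebraMap E H u = x ^ d)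
    (s t : E) (hquad : c ^ 2 - algebraMap E H s * c + algebraMap E H t = 0)
    (hgen : ∀ M : Subfield H, (Set.range (algebraMap E H)) ⊆ M → x ∈ M → c ∈ M →
      ∀ z : H, z ∈ M) :
    FiniteDimensional E H ∧ Module.finrank E H ≤ 2 * d := by
  set P : Polynomial E := Polynomial.X ^ d - Polynomial.C u with hP
  have hPmonic : P.Monic := Polynomial.monic_X_pow_sub_C u hd0
  have hPdeg : P.natDegree = d := by rw [hP]; exact Polynomial.natDegree_X_pow_sub_C
  have hPeval : Polynomial.aeval x P = 0 := by
    rw [hP, map_sub, Polynomial.aeval_C, map_pow, Polynomial.aeval_X, hu, sub_self]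
  have hxint : IsIntegral E x := ⟨P, hPmonic, by rwa [← Polynomial.aeval_def]⟩
  set L1 : IntermediateField E H := IntermediateField.adjoin E {x} with hL1
  haveI hL1fd : FiniteDimensional E L1 := IntermediateField.adjoin.finiteDimensional hxint
  have hL1rank : Module.finrank E L1 ≤ d := by
    rw [hL1, IntermediateField.adjoin.finrank hxint]
    calc (minpoly E x).natDegree
        ≤ P.natDegree := Polynomial.natDegree_le_of_dvd (minpoly.dvd E _ hPeval) hPmonic.ne_zero
      _ = d := hPdeg
  have hXL1 : x ∈ L1 := IntermediateField.mem_adjoin_simple_self E _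
  set s' : L1 := ⟨algebraMap E H s, L1.algebraMap_mem s⟩ with hs'
  set t' : L1 := ⟨algebraMap E H t, L1.algebraMap_mem t⟩ with ht'
  set Q : Polynomial L1 := Polynomial.X ^ 2 - Polynomial.C s' * Polynomial.X + Polynomial.C t'
    with hQ
  have hQmonic : Q.Monic := by rw [hQ]; monicity!
  have hQdeg : Q.natDegree = 2 := by rw [hQ]; compute_degree!
  have hQeval : Polynomial.aeval c Q = 0 := by
    rw [hQ]
    simp only [map_add, map_sub, map_mul, map_pow, Polynomial.aeval_X, Polynomial.aeval_C]
    exact hquad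
  have hcint : IsIntegral L1 c := ⟨Q, hQmonic, by rwa [← Polynomial.aeval_def]⟩
  set N : IntermediateField L1 H := IntermediateField.adjoin L1 {c} with hN
  haveI hNfd : FiniteDimensional L1 N := IntermediateField.adjoin.finiteDimensional hcint
  have hcN : c ∈ N := IntermediateField.mem_adjoin_simple_self L1 c
  have hNtop : N = ⊤ := by
    rw [eq_top_iff]
    rintro z -
    refine hgen N.toSubfield ?_ (N.algebraMap_mem ⟨_, hXL1⟩) hcN z
    rintro y ⟨e, rfl⟩
    have h1 : algebraMap E H e ∈ L1 := L1.algebraMap_mem e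
    exact N.algebraMap_mem ⟨_, h1⟩
  have eN : (N : IntermediateField L1 H) ≃ₐ[L1] H :=
    (IntermediateField.equivOfEq hNtop).trans IntermediateField.topEquiv
  haveI hL1topfd : FiniteDimensional L1 H := Module.Finite.equiv eN.toLinearEquiv
  have hL1toprank : Module.finrank L1 H ≤ 2 := by
    rw [← eN.toLinearEquiv.finrank_eq, hN, IntermediateField.adjoin.finrank hcint]
    calc (minpoly L1 c).natDegree
        ≤ Q.natDegree := Polynomial.natDegree_le_of_dvd (minpoly.dvd L1 _ hQeval) hQmonic.ne_zero
      _ = 2 := hQdeg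
  haveI hfd : FiniteDimensional E H := FiniteDimensional.trans E L1 H
  refine ⟨hfd, ?_⟩
  have hmul : Module.finrank E ↥L1 * Module.finrank (↥L1) H = Module.finrank E H :=
    Module.finrank_mul_finrank E (↥L1) H
  rw [← hmul]
  calc Module.finrank E ↥L1 * Module.finrank (↥L1) H
      ≤ d * 2 := Nat.mul_le_mul hL1rank hL1toprank
    _ = 2 * d := by ring

end Stmt9Aux
open Polynomial nonZeroDivisors

set_option maxHeartbeats 1000000 in
set_option synthInstance.maxHeartbeats 400000 in
/-- Let `q = pⁿ`, `d = q + 1`, `F` the field with `q²` elements and `F₀` its subfield with `q`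
elements.  Let `H = F(t)`, `K = F(tᵈ)` and `F' = F₀(tᵈ)`.  Then `H/F'` is Galois of degree
`2d` with Galois group the dihedral group of order `2d`; moreover the subgroup
`Gal(H/K) = {σ : σ fixes K pointwise}` is a cyclic normal subgroup of order `d`, and every
element outside of it acts on it by inversion (the nontrivial element of `Gal(K/F')` inverts
`Gal(H/K)`). -/
theorem stmt_9 (p n : ℕ) (hp : p.Prime) (hn : 0 < n)
    (F : Type) [Field F] [Fintype F] (hcard : Fintype.card F = (p ^ n) ^ 2)
    (F₀ : Subfield F) (hF₀ : ∀ x : F, x ∈ F₀ ↔ x ^ (p ^ n) = x)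
    (F' : Subfield (RatFunc F))
    (hF' : F' = Subfield.closure
      ((algebraMap F (RatFunc F)) '' (F₀ : Set F) ∪ {RatFunc.X ^ (p ^ n + 1)}))
    (K : Subfield (RatFunc F))
    (hK : K = Subfield.closure
      (Set.range (algebraMap F (RatFunc F)) ∪ {RatFunc.X ^ (p ^ n + 1)})) :
    IsGalois F' (RatFunc F) ∧
    Module.finrank F' (RatFunc F) = 2 * (p ^ n + 1) ∧
    Nonempty ((RatFunc F ≃ₐ[F'] RatFunc F) ≃* DihedralGroup (p ^ n + 1)) ∧
    ∀ S : Subgroup (RatFunc F ≃ₐ[F'] RatFunc F),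
      (∀ σ, σ ∈ S ↔ ∀ x ∈ K, σ x = x) →
      S.Normal ∧ IsCyclic S ∧ Nat.card S = p ^ n + 1 ∧
        ∀ σ, σ ∉ S → ∀ τ ∈ S, σ * τ * σ⁻¹ = τ⁻¹ := by
  classical
  haveI hpfact : Fact p.Prime := ⟨hp⟩
  set q : ℕ := p ^ n with hqdef
  set d : ℕ := q + 1 with hddef
  have hq2 : 2 ≤ q := Nat.one_lt_pow hn.ne' hp.one_lt
  have hd0 : d ≠ 0 := by omega
  haveI : NeZero d := ⟨hd0⟩
  -- characteristic
  haveI hchar : CharP F p := by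
    haveI := ringChar.charP F
    obtain ⟨m, hm, hcard'⟩ := FiniteField.card F (ringChar F)
    have hdvd : p ∣ ringChar F ^ (m : ℕ) := by
      rw [← hcard', hcard]
      exact dvd_pow (dvd_pow_self p hn.ne') two_ne_zero
    have := hp.dvd_of_dvd_pow hdvd
    have : p = ringChar F := ((Nat.prime_dvd_prime_iff_eq hp hm).mp this)
    rw [this]; exact ringChar.charP F
  haveI : ExpChar F p := ExpChar.prime hp
  -- power facts
  have hpow_card : ∀ x : F, x ^ (q * q) = x := by
    intro x
    have : x ^ Fintype.card F = x := FiniteField.pow_card x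
    rwa [hcard, pow_two] at this
  have hqq : ∀ x : F, (x ^ q) ^ q = x := by
    intro x; rw [← pow_mul]; exact hpow_card x
  have hfrob_add : ∀ x y : F, (x + y) ^ q = x ^ q + y ^ q := by
    intro x y; exact add_pow_char_pow ..
  -- ζ
  obtain ⟨g, hg⟩ := IsCyclic.exists_generator (α := Fˣ)
  have hcardu : Fintype.card Fˣ = q * q - 1 := by
    rw [Fintype.card_units, hcard, pow_two]
  have horder_g : orderOf g = q * q - 1 := by
    rw [orderOf_eq_card_of_forall_mem_zpowers hg, Nat.card_eq_fintype_card, hcardu]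
  have hsq : q * q - 1 = d * (q - 1) := by
    have h := Nat.sq_sub_sq q 1
    rw [one_pow, pow_two] at h
    rw [hddef, ← h]
  set ζu : Fˣ := g ^ (q - 1) with hζu
  have horderu : orderOf ζu = d := by
    rw [hζu, orderOf_pow, horder_g, hsq, Nat.gcd_eq_right (dvd_mul_left (q - 1) d),
      Nat.mul_div_cancel _ (by omega : 0 < q - 1)]
  set ζ : F := ((ζu : Fˣ) : F) with hζdef
  have horderζ : orderOf ζ = d := by rw [orderOf_units]; exact horderu
  have hζ0 : ζ ≠ 0 := Units.ne_zero _
  have hζd : ζ ^ d = 1 := by rw [← horderζ]; exact pow_orderOf_eq_one ζ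
  have hζdvd : ∀ k, ζ ^ k = 1 ↔ d ∣ k := by
    intro k; rw [← horderζ, orderOf_dvd_iff_pow_eq_one]
  have hζq1 : ζ ^ q * ζ = 1 := by rw [← pow_succ]; exact hζd
  have hζq : ζ ^ q = ζ⁻¹ := eq_inv_of_mul_eq_one_left hζq1
  have hζinj : ∀ i j : ℕ, i < d → j < d → ζ ^ i = ζ ^ j → i = j := by
    have key : ∀ i j : ℕ, i ≤ j → j < d → ζ ^ i = ζ ^ j → i = j := by
      intro i j hij hj h
      have h1 : ζ ^ i * ζ ^ (j - i) = ζ ^ i * 1 := by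
        rw [← pow_add, mul_one, Nat.add_sub_cancel' hij, h]
      have h2 : ζ ^ (j - i) = 1 := mul_left_cancel₀ (pow_ne_zero i hζ0) h1
      have := (hζdvd _).mp h2
      have : j - i = 0 := Nat.eq_zero_of_dvd_of_lt this (by omega)
      omega
    intro i j hi hj h
    rcases le_total i j with hle | hle
    · exact key i j hle hj h
    · exact (key j i hle hi h.symm).symm
  have hζqneζ : ζ ^ q ≠ ζ := by
    intro h
    have : q = 1 := hζinj q 1 (by omega) (by omega) (by rw [h, pow_one])
    omega
  -- field generation
  have hF₀mem : ∀ y : F, y + y ^ q ∈ F₀ := by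
    intro y; rw [hF₀, hfrob_add, hqq]; ring
  have hFgen : ∀ M : Subfield F, ((F₀ : Set F) ⊆ M) → ζ ∈ M → ∀ x : F, x ∈ M := by
    intro M hM0 hMζ x
    have hne : ζ - ζ⁻¹ ≠ 0 := by
      rw [sub_ne_zero]
      intro h
      exact hζqneζ (by rw [hζq, ← h])
    have hm : ((ζ * x + (ζ * x) ^ q) - ζ⁻¹ * (x + x ^ q)) / (ζ - ζ⁻¹) = x := by
      rw [div_eq_iff hne, mul_pow, hζq]
      ring
    rw [← hm]
    exact div_mem
      (sub_mem (hM0 (hF₀mem (ζ * x))) (mul_mem (M.inv_mem hMζ) (hM0 (hF₀mem x))))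
      (sub_mem hMζ (M.inv_mem hMζ))
  -- the automorphisms
  have hgal_apply : ∀ x : F, iterateFrobeniusEquiv F p n x = x ^ q := by
    intro x
    rw [iterateFrobeniusEquiv_def]
  set σ : RatFunc F ≃+* RatFunc F := Stmt9Aux.rfScale ζ hζ0 with hσdef
  set τ : RatFunc F ≃+* RatFunc F := Stmt9Aux.rfFrob (iterateFrobeniusEquiv F p n) with hτdef
  have hσC : ∀ a : F, σ (algebraMap F _ a) = algebraMap F _ a := Stmt9Aux.rfScale_C ζ hζ0
  have hσX : σ RatFunc.X = algebraMap F _ ζ * RatFunc.X := Stmt9Aux.rfScale_X ζ hζ0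
  have hτC : ∀ a : F, τ (algebraMap F _ a) = algebraMap F _ (a ^ q) := by
    intro a; rw [hτdef, Stmt9Aux.rfFrob_C, hgal_apply]
  have hτX : τ RatFunc.X = RatFunc.X := Stmt9Aux.rfFrob_X _
  -- F' is fixed
  have hσF' : ∀ x ∈ F', σ x = x := by
    rw [hF']
    refine Stmt9Aux.fix_closure (σ : RatFunc F →+* RatFunc F) _ ?_
    rintro y (⟨a, ha, rfl⟩ | rfl)
    · exact hσC a
    · show σ (RatFunc.X ^ d) = RatFunc.X ^ d
      rw [map_pow, hσX, mul_pow, ← map_pow, hζd, map_one, one_mul]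
  have hτF' : ∀ x ∈ F', τ x = x := by
    rw [hF']
    refine Stmt9Aux.fix_closure (τ : RatFunc F →+* RatFunc F) _ ?_
    rintro y (⟨a, ha, rfl⟩ | rfl)
    · show τ ((algebraMap F (RatFunc F)) a) = (algebraMap F (RatFunc F)) a
      rw [hτC, (hF₀ a).mp ha]
    · show τ (RatFunc.X ^ d) = RatFunc.X ^ d
      rw [map_pow, hτX]
  -- the algebra equivalences
  set σ' : RatFunc F ≃ₐ[F'] RatFunc F :=
    AlgEquiv.ofRingEquiv (fun x => hσF' x x.2) with hσ'def
  set τ' : RatFunc F ≃ₐ[F'] RatFunc F :=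
    AlgEquiv.ofRingEquiv (fun x => hτF' x x.2) with hτ'def
  have hσ'app : ∀ x, σ' x = σ x := fun _ => rfl
  have hτ'app : ∀ x, τ' x = τ x := fun _ => rfl
  -- extensionality for the Galois group
  have hGext : ∀ f g : RatFunc F ≃ₐ[F'] RatFunc F,
      (∀ a : F, f (algebraMap F _ a) = g (algebraMap F _ a)) →
      f RatFunc.X = g RatFunc.X → f = g := by
    intro f g hC hX
    have h := Stmt9Aux.ratfunc_ringHom_ext
      ((f : RatFunc F ≃+* RatFunc F) : RatFunc F →+* RatFunc F)
      ((g : RatFunc F ≃+* RatFunc F) : RatFunc F →+* RatFunc F) hC hX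
    exact AlgEquiv.ext fun x => DFunLike.congr_fun h x
  -- power computations
  have hpowC : ∀ (k : ℕ) (a : F), (σ' ^ k) (algebraMap F _ a) = algebraMap F _ a := by
    intro k a
    induction k with
    | zero => rw [pow_zero]; rfl
    | succ k ih => rw [pow_succ, AlgEquiv.mul_apply, hσ'app, hσC, ih]
  have hpowX : ∀ k : ℕ, (σ' ^ k) RatFunc.X = algebraMap F _ (ζ ^ k) * RatFunc.X := by
    intro k
    induction k with
    | zero => simp
    | succ k ih =>
      rw [pow_succ', AlgEquiv.mul_apply, ih, map_mul, hσ'app, hσ'app, hσC, hσX,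
        ← mul_assoc, ← map_mul, ← pow_succ]
  -- arithmetic of exponents
  have hvalcast : ∀ a : ZMod d, ((a.val : ℕ) : ZMod d) = a := fun a => ZMod.natCast_rightInverse a
  have hζcast : ∀ a b : ℕ, ((a : ZMod d) = (b : ZMod d)) → ζ ^ a = ζ ^ b := by
    intro a b hab
    have hu : ζu ^ d = 1 := by rw [← horderu]; exact pow_orderOf_eq_one ζu
    have h2 := Stmt9Aux.pow_eq_pow_of_modEq hu ((ZMod.natCast_eq_natCast_iff a b d).mp hab)
    have := congrArg (Units.val) h2
    simpa using this
  have hqcast : ((q : ℕ) : ZMod d) = -1 := by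
    have h1 : ((d : ℕ) : ZMod d) = 0 := ZMod.natCast_self d
    rw [hddef] at h1
    push_cast at h1
    exact eq_neg_of_add_eq_zero_left h1
  have hσ'd : σ' ^ d = 1 := by
    refine hGext _ _ (fun a => ?_) ?_
    · rw [hpowC]; rfl
    · rw [hpowX, hζd, map_one, one_mul]; rfl
  have hτ'2 : τ' * τ' = 1 := by
    refine hGext _ _ (fun a => ?_) ?_
    · rw [AlgEquiv.mul_apply, hτ'app, hτ'app, hτC, hτC, hqq]; rfl
    · rw [AlgEquiv.mul_apply, hτ'app, hτ'app, hτX, hτX]; rfl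
  have hadd : ∀ i j : ZMod d, σ' ^ (i + j).val = σ' ^ i.val * σ' ^ j.val := by
    intro i j
    rw [← pow_add]
    refine Stmt9Aux.pow_eq_pow_of_modEq hσ'd ?_
    refine (ZMod.natCast_eq_natCast_iff _ _ _).mp ?_
    push_cast
    rw [hvalcast, hvalcast, hvalcast]
  -- relations
  have hcomm : ∀ i : ZMod d, σ' ^ i.val * τ' = τ' * σ' ^ (-i).val := by
    intro i
    refine hGext _ _ (fun a => ?_) ?_
    · rw [AlgEquiv.mul_apply, AlgEquiv.mul_apply, hτ'app, hτC, hpowC, hpowC, hτ'app, hτC]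
    · rw [AlgEquiv.mul_apply, AlgEquiv.mul_apply, hτ'app, hτX, hpowX, hpowX, hτ'app, map_mul,
        hτC, hτX, ← pow_mul]
      congr 2
      refine hζcast _ _ ?_
      push_cast
      rw [hvalcast, hvalcast, hqcast]
      ring
  -- the dihedral homomorphism
  let fmap : DihedralGroup d → (RatFunc F ≃ₐ[F'] RatFunc F) := fun w =>
    match w with
    | DihedralGroup.r i => σ' ^ i.val
    | DihedralGroup.sr i => τ' * σ' ^ i.val
  have hf1 : fmap 1 = 1 := by
    show σ' ^ (0 : ZMod d).val = 1
    rw [ZMod.val_zero, pow_zero]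
  have hfmul : ∀ w₁ w₂, fmap (w₁ * w₂) = fmap w₁ * fmap w₂ := by
    rintro (i | i) (j | j)
    · show σ' ^ (i + j).val = σ' ^ i.val * σ' ^ j.val
      exact hadd i j
    · show τ' * σ' ^ (j - i).val = σ' ^ i.val * (τ' * σ' ^ j.val)
      rw [← mul_assoc, hcomm i, mul_assoc, ← hadd, sub_eq_neg_add]
    · show τ' * σ' ^ (i + j).val = τ' * σ' ^ i.val * σ' ^ j.val
      rw [mul_assoc, ← hadd]
    · show σ' ^ (j - i).val = τ' * σ' ^ i.val * (τ' * σ' ^ j.val)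
      rw [mul_assoc, ← mul_assoc (σ' ^ i.val), hcomm i, ← mul_assoc, ← mul_assoc, hτ'2,
        one_mul, ← hadd, sub_eq_neg_add]
  let f : DihedralGroup d →* (RatFunc F ≃ₐ[F'] RatFunc F) := ⟨⟨fmap, hf1⟩, hfmul⟩
  have hfr : ∀ i : ZMod d, f (DihedralGroup.r i) = σ' ^ i.val := fun _ => rfl
  have hfsr : ∀ i : ZMod d, f (DihedralGroup.sr i) = τ' * σ' ^ i.val := fun _ => rfl
  -- injectivity
  have hXne : (RatFunc.X : RatFunc F) ≠ 0 := RatFunc.X_ne_zero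
  have hCinj : Function.Injective (algebraMap F (RatFunc F)) := (algebraMap F (RatFunc F)).injective
  have hfinj : Function.Injective f := by
    refine (injective_iff_map_eq_one f).mpr ?_
    rintro (i | i) h
    · rw [hfr] at h
      have hX := congrArg (fun (g : RatFunc F ≃ₐ[F'] RatFunc F) => g RatFunc.X) h
      simp only [hpowX, AlgEquiv.one_apply] at hX
      have h1 : ζ ^ i.val = 1 := by
        have h2 : algebraMap F (RatFunc F) (ζ ^ i.val) = algebraMap F (RatFunc F) 1 := by
          rw [map_one]
          exact mul_right_cancel₀ hXne (hX.trans (one_mul RatFunc.X).symm)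
        exact hCinj h2
      have hval : i.val = 0 :=
        Nat.eq_zero_of_dvd_of_lt ((hζdvd _).mp h1) (ZMod.val_lt i) 
      have : i = 0 := by rwa [← ZMod.val_eq_zero]
      rw [this]
      rfl
    · exfalso
      rw [hfsr] at h
      have hX := congrArg
        (fun (g : RatFunc F ≃ₐ[F'] RatFunc F) => g (algebraMap F (RatFunc F) ζ)) h
      simp only [AlgEquiv.mul_apply, AlgEquiv.one_apply, hpowC] at hX
      rw [hτ'app, hτC] at hX
      exact hζqneζ (hCinj hX)
  -- upper bound on the degree
  have huF' : (RatFunc.X : RatFunc F) ^ d ∈ F' := by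
    rw [hF']; exact Subfield.subset_closure (Or.inr rfl)
  have hF₀F' : ∀ a : F, a ∈ F₀ → algebraMap F (RatFunc F) a ∈ F' := by
    intro a ha; rw [hF']; exact Subfield.subset_closure (Or.inl ⟨a, ha, rfl⟩)
  set c : RatFunc F := algebraMap F (RatFunc F) ζ with hc
  have hquadI : c ^ 2 - algebraMap F' (RatFunc F)
        ⟨algebraMap F (RatFunc F) (ζ + ζ ^ q), hF₀F' _ (hF₀mem ζ)⟩ * c
      + algebraMap F' (RatFunc F) 1 = 0 := by
    have key : ζ ^ 2 - (ζ + ζ ^ q) * ζ + 1 = 0 := by linear_combination -hζq1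
    have key2 := congrArg (algebraMap F (RatFunc F)) key
    rw [map_add, map_sub, map_mul, map_pow, map_one, map_zero] at key2
    have hs' : (algebraMap F' (RatFunc F)) ⟨algebraMap F (RatFunc F) (ζ + ζ ^ q),
        hF₀F' _ (hF₀mem ζ)⟩ = algebraMap F (RatFunc F) (ζ + ζ ^ q) := rfl
    rw [hs', map_one, hc]
    exact key2
  have hgenI : ∀ M : Subfield (RatFunc F),
      (Set.range (algebraMap F' (RatFunc F))) ⊆ M → RatFunc.X ∈ M → c ∈ M →
      ∀ z : RatFunc F, z ∈ M := by
    intro M hrange hxM hcM z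
    have hCa : ∀ a : F, algebraMap F (RatFunc F) a ∈ M := by
      have hsub : (F₀ : Set F) ⊆
          ((M.comap (algebraMap F (RatFunc F)) : Subfield F) : Set F) := by
        intro a ha
        show algebraMap F (RatFunc F) a ∈ M
        exact hrange ⟨⟨_, hF₀F' a ha⟩, rfl⟩
      intro a
      exact hFgen _ hsub hcM a
    exact Stmt9Aux.ratfunc_mem_of M hCa hxM z
  obtain ⟨hfd, hrank_le⟩ := Stmt9Aux.finrank_le_aux (E := F') RatFunc.X c d hd0
    ⟨RatFunc.X ^ d, huF'⟩ rfl
    ⟨algebraMap F (RatFunc F) (ζ + ζ ^ q), hF₀F' _ (hF₀mem ζ)⟩ 1 hquadI hgenI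
  -- cardinalities
  letI : Fintype (RatFunc F ≃ₐ[F'] RatFunc F) := AlgEquiv.fintype F' (RatFunc F)
  have hcard_le :
      Fintype.card (RatFunc F ≃ₐ[F'] RatFunc F) ≤ Module.finrank F' (RatFunc F) := by
    calc Fintype.card (RatFunc F ≃ₐ[F'] RatFunc F)
        ≤ Fintype.card (RatFunc F →ₐ[F'] RatFunc F) :=
          Fintype.card_le_of_injective _ (AlgEquiv.coe_algHom_injective)
      _ ≤ Module.finrank (RatFunc F) (RatFunc F →ₗ[F'] RatFunc F) :=
          finrank_algHom F' (RatFunc F)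
      _ = Module.finrank F' (RatFunc F) := Module.finrank_linearMap_self _ _ _
  have hcard_ge : 2 * d ≤ Fintype.card (RatFunc F ≃ₐ[F'] RatFunc F) := by
    rw [← DihedralGroup.card (n := d)]
    exact Fintype.card_le_of_injective f hfinj
  have hGcard : Fintype.card (RatFunc F ≃ₐ[F'] RatFunc F) = 2 * d :=
    le_antisymm (hcard_le.trans hrank_le) hcard_ge
  have hrank : Module.finrank F' (RatFunc F) = 2 * d :=
    le_antisymm hrank_le (by rw [← hGcard]; exact hcard_le)
  haveI hgalois : IsGalois F' (RatFunc F) :=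
    IsGalois.of_card_aut_eq_finrank F' (RatFunc F) (by rw [Nat.card_eq_fintype_card, hGcard, hrank])
  have hbij : Function.Bijective f :=
    (Fintype.bijective_iff_injective_and_card f).mpr
      ⟨hfinj, by rw [DihedralGroup.card, hGcard]⟩
  refine ⟨hgalois, hrank, ⟨(MulEquiv.ofBijective f hbij).symm⟩, ?_⟩
  -- the subgroup statements
  intro S hS
  have hζK : algebraMap F (RatFunc F) ζ ∈ K := by
    rw [hK]; exact Subfield.subset_closure (Or.inl ⟨ζ, rfl⟩)
  have hσ'S : σ' ∈ S := by
    refine (hS σ').mpr ?_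
    intro x hx
    rw [hK] at hx
    rw [hσ'app]
    refine Stmt9Aux.fix_closure (σ : RatFunc F →+* RatFunc F) _ ?_ x hx
    rintro y (⟨a, rfl⟩ | rfl)
    · exact hσC a
    · show σ (RatFunc.X ^ d) = RatFunc.X ^ d
      rw [map_pow, hσX, mul_pow, ← map_pow, hζd, map_one, one_mul]
  have hpow_mem : ∀ k : ℕ, σ' ^ k ∈ S := fun k => pow_mem hσ'S k
  have hsr_not : ∀ i : ZMod d, (τ' * σ' ^ i.val) ∉ S := by
    intro i hmem
    have h1 := (hS _).mp hmem (algebraMap F (RatFunc F) ζ) hζK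
    rw [AlgEquiv.mul_apply, hpowC, hτ'app, hτC] at h1
    exact hζqneζ (hCinj h1)
  have hSchar : ∀ g' ∈ S, ∃ i : ZMod d, g' = σ' ^ i.val := by
    intro g' hg'
    obtain ⟨w, rfl⟩ := hbij.2 g'
    cases w with
    | r i => exact ⟨i, by rw [hfr]⟩
    | sr i =>
      rw [hfsr] at hg'
      exact absurd hg' (hsr_not i)
  have hinv : ∀ g' ∉ S, ∀ t ∈ S, g' * t * g'⁻¹ = t⁻¹ := by
    intro g' hg' t ht
    obtain ⟨w, rfl⟩ := hbij.2 g'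
    obtain ⟨j, rfl⟩ := hSchar _ ht
    cases w with
    | r i =>
      exact absurd (by rw [hfr]; exact hpow_mem i.val) hg'
    | sr i =>
      have key : f (DihedralGroup.sr i) * σ' ^ j.val
          = (σ' ^ j.val)⁻¹ * f (DihedralGroup.sr i) := by
        rw [← hfr j, ← map_mul, ← map_inv, ← map_mul]
        congr 1
        show DihedralGroup.sr (i + j) = DihedralGroup.sr (i - -j)
        rw [sub_neg_eq_add]
      calc f (DihedralGroup.sr i) * σ' ^ j.val * (f (DihedralGroup.sr i))⁻¹
          = (σ' ^ j.val)⁻¹ * (f (DihedralGroup.sr i) * (f (DihedralGroup.sr i))⁻¹) := by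
            rw [key, mul_assoc]
        _ = (σ' ^ j.val)⁻¹ := by rw [mul_inv_cancel, mul_one]
  have hnormal : S.Normal := by
    constructor
    intro t ht g'
    by_cases hgS : g' ∈ S
    · exact S.mul_mem (S.mul_mem hgS ht) (S.inv_mem hgS)
    · rw [hinv g' hgS t ht]; exact S.inv_mem ht
  have hcyc : IsCyclic S := by
    refine ⟨⟨⟨σ', hσ'S⟩, ?_⟩⟩
    rintro ⟨x, hx⟩
    obtain ⟨i, rfl⟩ := hSchar x hx
    refine ⟨(i.val : ℤ), ?_⟩
    apply Subtype.ext
    rw [SubgroupClass.coe_zpow]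
    push_cast
    rw [zpow_natCast]
  have hScard : Nat.card S = d := by
    have hbij2 : Function.Bijective (fun i : ZMod d => (⟨σ' ^ i.val, hpow_mem _⟩ : S)) := by
      constructor
      · intro i j hij
        have h1 : σ' ^ i.val = σ' ^ j.val := congrArg Subtype.val hij
        have h2 := congrArg (fun (g : RatFunc F ≃ₐ[F'] RatFunc F) => g RatFunc.X) h1
        simp only [hpowX] at h2
        have h3 : ζ ^ i.val = ζ ^ j.val := hCinj (mul_right_cancel₀ hXne h2)
        have h4 := hζinj _ _ (ZMod.val_lt i) (ZMod.val_lt j) h3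
        have h5 := congrArg (Nat.cast : ℕ → ZMod d) h4
        rwa [hvalcast, hvalcast] at h5
      · rintro ⟨x, hx⟩
        obtain ⟨i, rfl⟩ := hSchar x hx
        exact ⟨i, rfl⟩
    rw [← Nat.card_eq_of_bijective _ hbij2, Nat.card_zmod]
  exact ⟨hnormal, hcyc, hScard, hinv⟩
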